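/- Let F be a field with a discrete valuation v with residue field k. For f, g ∈ F^×, define the tame symbol d_v(f,g) = (−1)^{v(f)v(g)} · image of f^{v(g)} g^{−v(f)} in k^×. Then f^{v(g)} g^{−v(f)} is a unit of the valuation ring, and the tame symbol satisfies the Steinberg relation: if f, 1−f ∈ F^×, then d_v(f, 1−f) = 1. -/

import Mathlib

section Aux

variable {F : Type*} [Field F] (v : F → ℤ)
  (hmul : ∀ x y : F, x ≠ 0 → y ≠ 0 → v (x * y) = v x + v y)

include hmul

lemma aux_v_one : v 1 = 0 := by
  have := hmul 1 1 one_ne_zero one_ne_zero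
  simp at this; omega

lemma aux_v_neg_one : v (-1) = 0 := by
  have h1 := aux_v_one v hmul
  have := hmul (-1) (-1) (by norm_num) (by norm_num)
  simp at this; omega

lemma aux_v_inv (x : F) (hx : x ≠ 0) : v x⁻¹ = -v x := by
  have h1 := aux_v_one v hmul
  have := hmul x x⁻¹ hx (inv_ne_zero hx)
  rw [mul_inv_cancel₀ hx] at this; omega

lemma aux_v_neg (x : F) (hx : x ≠ 0) : v (-x) = v x := by
  have := hmul (-1) x (by norm_num) hx
  rw [neg_one_mul] at this
  rw [this, aux_v_neg_one v hmul]; ring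

lemma aux_v_pow (x : F) (hx : x ≠ 0) : ∀ n : ℕ, v (x ^ n) = n * v x := by
  intro n
  induction n with
  | zero => simpa using aux_v_one v hmul
  | succ n ih =>
    rw [pow_succ, hmul _ _ (pow_ne_zero _ hx) hx, ih]
    push_cast; ring

lemma aux_v_zpow (x : F) (hx : x ≠ 0) : ∀ n : ℤ, v (x ^ n) = n * v x := by
  intro n
  cases n with
  | ofNat n => rw [Int.ofNat_eq_coe, zpow_natCast, aux_v_pow v hmul x hx]
  | negSucc n =>
    rw [zpow_negSucc, aux_v_inv v hmul _ (pow_ne_zero _ hx), aux_v_pow v hmul x hx]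
    rw [Int.negSucc_eq]; push_cast; ring

variable (hadd : ∀ x y : F, x ≠ 0 → y ≠ 0 → x + y ≠ 0 → min (v x) (v y) ≤ v (x + y))

include hadd

lemma aux_pow_close (u : F) (hu : u ≠ 0) (huv : v u = 0)
    (h1 : 1 ≤ v (u - 1)) : ∀ n : ℕ, u ^ n = 1 ∨ 1 ≤ v (u ^ n - 1) := by
  intro n
  induction n with
  | zero => left; simp
  | succ n ih =>
    rcases ih with h | h
    · rw [pow_succ, h, one_mul]
      rcases eq_or_ne u 1 with rfl | hu1
      · left; rfl
      · right; exact h1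
    · rcases eq_or_ne (u ^ n) 1 with hn | hn
      · right; rw [pow_succ, hn, one_mul]; exact h1
      rcases eq_or_ne (u ^ (n + 1)) 1 with he | he
      · left; exact he
      · right
        have hn1 : u ^ n - 1 ≠ 0 := sub_ne_zero.mpr hn
        have hu1 : u ≠ 1 := by
          intro hc; subst hc; simp at he
        have hum1 : u - 1 ≠ 0 := sub_ne_zero.mpr hu1
        have key : u ^ (n + 1) - 1 = u * (u ^ n - 1) + (u - 1) := by ring
        rw [key]
        have ha : u * (u ^ n - 1) ≠ 0 := mul_ne_zero hu hn1
        have hab : u * (u ^ n - 1) + (u - 1) ≠ 0 := by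
          rw [← key]; exact sub_ne_zero.mpr he
        have h2 := hadd _ _ ha hum1 hab
        have hva : v (u * (u ^ n - 1)) = v (u ^ n - 1) := by
          rw [hmul _ _ hu hn1, huv]; ring
        rw [hva] at h2
        omega

lemma aux_zpow_close (u : F) (hu : u ≠ 0) (huv : v u = 0)
    (h1 : 1 ≤ v (u - 1)) : ∀ n : ℤ, u ^ n = 1 ∨ 1 ≤ v (u ^ n - 1) := by
  intro n
  cases n with
  | ofNat n =>
    rw [Int.ofNat_eq_coe, zpow_natCast]
    exact aux_pow_close v hmul hadd u hu huv h1 n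
  | negSucc n =>
    rw [zpow_negSucc]
    rcases aux_pow_close v hmul hadd u hu huv h1 (n + 1) with he | hle
    · left; rw [he]; simp
    · rcases eq_or_ne ((u ^ (n + 1))⁻¹) 1 with he | he
      · left; exact he
      · right
        have hw : u ^ (n + 1) ≠ 0 := pow_ne_zero _ hu
        have hw1 : u ^ (n + 1) ≠ 1 := by
          intro hc; rw [hc] at he; simp at he
        have key : (u ^ (n + 1))⁻¹ - 1 = -(u ^ (n + 1) - 1) * (u ^ (n + 1))⁻¹ := by
          field_simp
          ring
        rw [key, hmul _ _ (neg_ne_zero.mpr (sub_ne_zero.mpr hw1)) (inv_ne_zero hw),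
          aux_v_neg v hmul _ (sub_ne_zero.mpr hw1), aux_v_inv v hmul _ hw,
          aux_v_pow v hmul u hu, huv]
        omega

end Aux

/-- The unit representative of the tame symbol `d_v(f,g)`:
`(-1)^{v(f)v(g)} · f^{v(g)} · g^{-v(f)}`.  Its residue class in `k^×` is the
tame symbol. -/
noncomputable def tameSymbolRep (F : Type*) [Field F] (v : F → ℤ) (f g : F) : F :=
  (-1 : F) ^ (v f * v g) * f ^ (v g) * g ^ (-(v f))

/-- Let `(F, v)` be a discretely valued field with residue field `k`.  For
`f, g ∈ F^×`, the element `f^{v(g)} g^{-v(f)}` is a unit of the valuation ring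
(it has valuation `0`), and the tame symbol satisfies the Steinberg relation: if
`f, 1-f ∈ F^×` then `d_v(f, 1-f) = 1` in `k^×`, i.e. the unit representative
`(-1)^{v(f)v(1-f)} f^{v(1-f)} (1-f)^{-v(f)}` is congruent to `1` modulo the
maximal ideal. -/
theorem tame_symbol_unit_and_steinberg (F : Type*) [Field F] (v : F → ℤ)
    (hmul : ∀ x y : F, x ≠ 0 → y ≠ 0 → v (x * y) = v x + v y)
    (hadd : ∀ x y : F, x ≠ 0 → y ≠ 0 → x + y ≠ 0 → min (v x) (v y) ≤ v (x + y))
    (hsurj : ∀ n : ℤ, ∃ x : F, x ≠ 0 ∧ v x = n)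
    (f g : F) (hf : f ≠ 0) (hg : g ≠ 0) :
    v (f ^ (v g) * g ^ (-(v f))) = 0 ∧
    (g = 1 - f →
      (tameSymbolRep F v f g = 1 ∨ 1 ≤ v (tameSymbolRep F v f g - 1))) := by
  constructor
  · rw [hmul _ _ (zpow_ne_zero _ hf) (zpow_ne_zero _ hg),
      aux_v_zpow v hmul f hf, aux_v_zpow v hmul g hg]
    ring
  · rintro rfl
    have h1 : v (1 : F) = 0 := aux_v_one v hmul
    have hvnf : v (-f) = v f := aux_v_neg v hmul f hf
    have hb0 : min 0 (v f) ≤ v (1 - f) := by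
      have := hadd 1 (-f) one_ne_zero (neg_ne_zero.mpr hf)
        (by rw [← sub_eq_add_neg]; exact hg)
      rwa [← sub_eq_add_neg, h1, hvnf] at this
    rcases lt_trichotomy (v f) 0 with hlt | heq | hgt
    · -- v f < 0, so v (1 - f) = v f
      have hba : v (1 - f) = v f := by
        have h2 := hadd 1 (-(1 - f)) one_ne_zero (neg_ne_zero.mpr hg)
          (by rw [show (1 : F) + -(1 - f) = f by ring]; exact hf)
        rw [show (1 : F) + -(1 - f) = f by ring, h1,
          aux_v_neg v hmul _ hg] at h2
        omega
      set a := v f with ha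
      set u : F := -f * (1 - f)⁻¹ with hu_def
      have hu : u ≠ 0 := mul_ne_zero (neg_ne_zero.mpr hf) (inv_ne_zero hg)
      have huv : v u = 0 := by
        rw [hu_def, hmul _ _ (neg_ne_zero.mpr hf) (inv_ne_zero hg), hvnf,
          aux_v_inv v hmul _ hg, hba]
        ring
      have hu1 : u - 1 = -(1 - f)⁻¹ := by
        rw [hu_def]; field_simp; ring
      have hvu1 : 1 ≤ v (u - 1) := by
        rw [hu1, aux_v_neg v hmul _ (inv_ne_zero hg), aux_v_inv v hmul _ hg, hba]
        omega
      have hrep : tameSymbolRep F v f (1 - f) = u ^ a := by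
        rw [tameSymbolRep, hba, hu_def, ← ha]
        rw [show -f = (-1 : F) * f by ring, mul_zpow, mul_zpow, inv_zpow, ← zpow_neg]
        congr 1
        rcases Int.even_or_odd a with he | ho
        · rw [Even.neg_one_zpow (he.mul_right a), Even.neg_one_zpow he]
        · rw [Odd.neg_one_zpow (ho.mul ho), Odd.neg_one_zpow ho]
      rw [hrep]
      exact aux_zpow_close v hmul hadd u hu huv hvu1 a
    · -- v f = 0
      rcases eq_or_lt_of_le (by omega : (0 : ℤ) ≤ v (1 - f)) with hbz | hbp
      · left
        rw [tameSymbolRep, heq, ← hbz]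
        simp
      · -- v (1 - f) ≥ 1, rep = f ^ (v (1 - f))
        have hvf1 : 1 ≤ v (f - 1) := by
          rw [show f - 1 = -(1 - f) by ring, aux_v_neg v hmul _ hg]
          omega
        have hrep : tameSymbolRep F v f (1 - f) = f ^ (v (1 - f)) := by
          rw [tameSymbolRep, heq]
          simp
        rw [hrep]
        exact aux_zpow_close v hmul hadd f hf heq hvf1 (v (1 - f))
    · -- v f > 0, so v (1 - f) = 0
      have hbz : v (1 - f) = 0 := by
        have h2 := hadd (1 - f) f hg hf
          (by rw [sub_add_cancel]; exact one_ne_zero)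
        rw [sub_add_cancel, h1] at h2
        omega
      have hvu1 : 1 ≤ v ((1 - f) - 1) := by
        rw [show (1 - f) - 1 = -f by ring, hvnf]
        omega
      have hrep : tameSymbolRep F v f (1 - f) = (1 - f) ^ (-(v f)) := by
        rw [tameSymbolRep, hbz]
        simp
      rw [hrep]
      exact aux_zpow_close v hmul hadd (1 - f) hg hbz hvu1 (-(v f))
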